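/- If (u_i) are i.i.d. random variables with standard logistic cdf F(u) = 1/(1+e^{-u}) and M is an independent geometric random variable on {1,2,...} with success probability π ∈ (0,1), then max_{i≤M} u_i has cdf u ↦ F(u + log π), i.e. is logistic with location -log π. -/

import Mathlib

noncomputable def logisticF (u : ℝ) : ℝ := 1 / (1 + Real.exp (-u))

/-- The cdf of the geometric maximum of i.i.d. logistic variables,
E[F(u)^M] = ∑_{n≥1} (1-π)^{n-1} π F(u)^n, equals F(u + log π). -/
theorem logistic_geometric_max (π : ℝ) (hπ : π ∈ Set.Ioo (0 : ℝ) 1) (u : ℝ) :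
    (∑' m : ℕ, (1 - π) ^ m * π * logisticF u ^ (m + 1))
      = logisticF (u - Real.log (1 / π)) := by
  obtain ⟨hπ0, hπ1⟩ := hπ
  have he : 0 < Real.exp (-u) := Real.exp_pos _
  have hd : 0 < 1 + Real.exp (-u) := by linarith
  have hF0 : 0 < logisticF u := by
    unfold logisticF; positivity
  have hF1 : logisticF u < 1 := by
    unfold logisticF
    rw [div_lt_one hd]; linarith
  have hr : |(1 - π) * logisticF u| < 1 := by
    rw [abs_of_nonneg (by nlinarith)]
    nlinarith
  have key : (∑' m : ℕ, (1 - π) ^ m * π * logisticF u ^ (m + 1))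
      = π * logisticF u * (1 - (1 - π) * logisticF u)⁻¹ := by
    rw [← tsum_geometric_of_lt_one (by nlinarith) (by rw [abs_of_nonneg (by nlinarith)] at hr; exact hr),
      ← tsum_mul_left]
    congr 1; ext m
    rw [mul_pow]; ring
  rw [key]
  have hexp : Real.exp (-(u - Real.log (1 / π))) = Real.exp (-u) / π := by
    rw [neg_sub, Real.exp_sub, Real.exp_log (by positivity), Real.exp_neg]
    field_simp
  unfold logisticF
  rw [hexp]
  have h1 : (1 : ℝ) - (1 - π) * (1 / (1 + Real.exp (-u))) ≠ 0 := by
    have : (1 - π) * logisticF u < 1 := lt_of_abs_lt hr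
    unfold logisticF at this; linarith
  field_simp
  exact (by rw [show (1 : ℝ) + Real.exp (-u) - (1 - π) = π + Real.exp (-u) by ring, div_self (by positivity)])
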